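/- Let B be an integral domain containing a field k of characteristic zero, and let D, E be commuting locally nilpotent derivations of B with D nonzero and E nonzero. If E vanishes on ker(D), then ker(D) ⊆ ker(E), and consequently ker(D) = ker(E). -/
import Mathlib


variable {k B : Type*} [Field k] [CharZero k] [CommRing B] [IsDomain B] [Algebra k B]

/-- A derivation is locally nilpotent if every element is killed by some iterate. -/
def IsLocallyNilpotentDeriv {R A : Type*} [CommRing R] [CommRing A] [Algebra R A]
    (D : Derivation R A A) : Prop :=
  ∀ x : A, ∃ n : ℕ, (⇑D)^[n] x = 0

/-- The kernel of a derivation, as a subalgebra. -/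
def Derivation.kerSubalgebra {R A : Type*} [CommRing R] [CommRing A] [Algebra R A]
    (D : Derivation R A A) : Subalgebra R A where
  carrier := {b | D b = 0}
  mul_mem' := by
    intro a b ha hb
    simp only [Set.mem_setOf_eq] at *
    rw [D.leibniz]
    simp [ha, hb]
  add_mem' := by
    intro a b ha hb
    simp only [Set.mem_setOf_eq] at *
    simp [ha, hb]
  algebraMap_mem' := by intro r; simp [Set.mem_setOf_eq]

/-- For commuting nonzero locally nilpotent derivations D and E of a domain B, if E
vanishes on ker D then ker D ⊆ ker E and consequently ker D = ker E. -/
theorem kernels_eq_of_vanishing (D E : Derivation k B B) (hD : D ≠ 0) (hE : E ≠ 0)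
    (hDL : IsLocallyNilpotentDeriv D) (hEL : IsLocallyNilpotentDeriv E)
    (hcomm : ∀ b : B, D (E b) = E (D b))
    (hvan : ∀ b : B, D b = 0 → E b = 0) :
    D.kerSubalgebra ≤ E.kerSubalgebra ∧ D.kerSubalgebra = E.kerSubalgebra := by
  have hEleD : ∀ b : B, E b = 0 → D b = 0 := by
    intro b0 hb0
    by_contra hDb0
    -- E commutes with iterates of D
    have hiter : ∀ (m : ℕ) (c : B), E ((⇑D)^[m] c) = (⇑D)^[m] (E c) := by
      intro m
      induction m with
      | zero => intro c; simp
      | succ m ih =>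
        intro c
        rw [Function.iterate_succ_apply', Function.iterate_succ_apply', ← hcomm, ih]
    classical
    set n := Nat.find (hDL b0) with hn
    have hnspec : (⇑D)^[n] b0 = 0 := Nat.find_spec (hDL b0)
    have hn2 : 2 ≤ n := by
      by_contra h
      push_neg at h
      interval_cases n
      · simp only [Function.iterate_zero, id_eq] at hnspec
        exact hDb0 (by rw [hnspec]; simp)
      · exact hDb0 hnspec
    set x := (⇑D)^[n-2] b0 with hx
    set a := D x with ha
    have hax : a = (⇑D)^[n-1] b0 := by
      have h1 : n - 1 = (n-2) + 1 := by omega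
      rw [ha, hx, h1, Function.iterate_succ_apply']
    have ha0 : a ≠ 0 := by
      rw [hax]; exact Nat.find_min (hDL b0) (by omega)
    have hDa : D a = 0 := by
      rw [hax]
      have h2 : D ((⇑D)^[n-1] b0) = (⇑D)^[(n-1)+1] b0 :=
        (Function.iterate_succ_apply' _ _ _).symm
      have h1 : n - 1 + 1 = n := by omega
      rw [h2, h1, hnspec]
    have hEa : E a = 0 := hvan a hDa
    have hEx : E x = 0 := by
      rw [hx, hiter, hb0, Function.iterate_fixed (map_zero E ▸ map_zero D)]
    -- derivative of powers of x
    have hDxpow : ∀ j : ℕ, D (x ^ (j+1)) = ((j : B) + 1) * (x ^ j * a) := by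
      intro j
      induction j with
      | zero => simp [← ha]
      | succ j ih =>
        rw [pow_succ, D.leibniz, ih, ← ha, smul_eq_mul, smul_eq_mul]
        push_cast
        ring
    have hExpow : ∀ j : ℕ, E (x ^ j) = 0 := by
      intro j
      induction j with
      | zero => simp
      | succ j ih => rw [pow_succ, E.leibniz, ih, hEx, smul_zero, smul_zero, add_zero]
    have hDapow : ∀ m : ℕ, D (a ^ m) = 0 := by
      intro m
      induction m with
      | zero => simp
      | succ m ih => rw [pow_succ, D.leibniz, ih, hDa, smul_zero, smul_zero, add_zero]
    have hEapow : ∀ m : ℕ, E (a ^ m) = 0 := by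
      intro m
      induction m with
      | zero => simp
      | succ m ih => rw [pow_succ, E.leibniz, ih, hEa, smul_zero, smul_zero, add_zero]
    -- the span of {s * x^j : D s = 0}
    set G : Set B := {b | ∃ s : B, ∃ j : ℕ, D s = 0 ∧ b = s * x ^ j} with hG
    set N : Submodule k B := Submodule.span k G with hN
    have hNE : ∀ b ∈ N, E b = 0 := by
      intro b hb
      induction hb using Submodule.span_induction with
      | mem c hc =>
        obtain ⟨s, j, hs, rfl⟩ := hc
        rw [E.leibniz, hvan s hs, hExpow j, smul_zero, smul_zero, add_zero]
      | zero => simp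
      | add c1 c2 h1 h2 ih1 ih2 => rw [map_add, ih1, ih2, add_zero]
      | smul r c h ih => rw [E.map_smul, ih, smul_zero]
    -- antiderivatives within N
    have hanti : ∀ c ∈ N, ∃ q ∈ N, D q = a * c := by
      intro c hc
      induction hc using Submodule.span_induction with
      | mem c hc =>
        obtain ⟨s, j, hs, rfl⟩ := hc
        refine ⟨(((j : k) + 1)⁻¹) • (s * x ^ (j+1)), ?_, ?_⟩
        · exact Submodule.smul_mem _ _ (Submodule.subset_span ⟨s, j+1, hs, rfl⟩)
        · have hj0 : ((j : k) + 1) ≠ 0 := Nat.cast_add_one_ne_zero j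
          rw [D.map_smul, D.leibniz, hs, smul_zero, add_zero, smul_eq_mul, hDxpow j]
          have hcast : ((j : B) + 1) = algebraMap k B ((j : k) + 1) := by
            push_cast
            simp
          rw [hcast, Algebra.smul_def,
            show s * ((algebraMap k B) ((j:k) + 1) * (x ^ j * a))
              = (algebraMap k B) ((j:k)+1) * (s * (x^j*a)) by ring,
            ← mul_assoc, ← map_mul, inv_mul_cancel₀ hj0, map_one, one_mul]
          ring
      | zero => exact ⟨0, zero_mem _, by simp⟩
      | add c1 c2 h1 h2 ih1 ih2 =>
        obtain ⟨q1, hq1, hD1⟩ := ih1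
        obtain ⟨q2, hq2, hD2⟩ := ih2
        exact ⟨q1 + q2, add_mem hq1 hq2, by rw [map_add, hD1, hD2]; ring⟩
      | smul r c h ih =>
        obtain ⟨q, hq, hDq⟩ := ih
        refine ⟨r • q, Submodule.smul_mem _ _ hq, ?_⟩
        rw [D.map_smul, hDq, Algebra.smul_def, Algebra.smul_def]
        ring
    -- main induction: a power of a clears b into N
    have hmain : ∀ (m : ℕ) (b : B), (⇑D)^[m] b = 0 → ∃ m' : ℕ, a ^ m' * b ∈ N := by
      intro m
      induction m with
      | zero =>
        intro b hb
        simp only [Function.iterate_zero, id_eq] at hb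
        exact ⟨0, by rw [hb, mul_zero]; exact zero_mem _⟩
      | succ m ih =>
        intro b hb
        rw [Function.iterate_succ_apply] at hb
        obtain ⟨m', hm'⟩ := ih (D b) hb
        obtain ⟨q, hq, hDq⟩ := hanti _ hm'
        refine ⟨m' + 1, ?_⟩
        have hr : D (a ^ (m'+1) * b - q) = 0 := by
          rw [map_sub, D.leibniz, hDapow (m'+1), hDq, smul_eq_mul, smul_zero, add_zero,
            pow_succ]
          ring
        have hmem1 : a ^ (m'+1) * b - q ∈ N :=
          Submodule.subset_span ⟨_, 0, hr, by rw [pow_zero, mul_one]⟩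
        have := add_mem hmem1 hq
        simpa using this
    -- conclude E = 0
    have hE0 : E = 0 := by
      ext b
      obtain ⟨m, hm⟩ := hDL b
      obtain ⟨m', hm'⟩ := hmain m b hm
      have h1 : E (a ^ m' * b) = 0 := hNE _ hm'
      rw [E.leibniz, hEapow m', smul_zero, add_zero, smul_eq_mul] at h1
      rcases mul_eq_zero.mp h1 with h | h
      · exact absurd h (pow_ne_zero _ ha0)
      · simpa using h
    exact hE hE0
  have h1 : D.kerSubalgebra ≤ E.kerSubalgebra := fun b hb => hvan b hb
  exact ⟨h1, le_antisymm h1 (fun b hb => hEleD b hb)⟩
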